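/- Let G be a locally compact, Hausdorff, étale groupoid with non-compact unit space and let G̃ be its Alexandrov groupoid. Then the dynamic asymptotic dimension of G equals the dynamic asymptotic dimension of G̃. -/

import Mathlib

/-- A topological groupoid structure on a topological space `G`.  The range and source
maps land in the set of units (idempotents of `src`), composition `mul g h` is defined
when `src g = rng h`, and all structure maps are continuous. -/
structure TopGroupoid (G : Type*) [TopologicalSpace G] where
  src : G → G
  rng : G → G
  mul : (g h : G) → src g = rng h → G
  inv : G → G
  src_src : ∀ g, src (src g) = src g
  rng_src : ∀ g, rng (src g) = src g
  src_rng : ∀ g, src (rng g) = rng g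
  rng_rng : ∀ g, rng (rng g) = rng g
  src_mul : ∀ g h hgh, src (mul g h hgh) = src h
  rng_mul : ∀ g h hgh, rng (mul g h hgh) = rng g
  mul_assoc : ∀ g h k (hgh : src g = rng h) (hhk : src h = rng k)
      (h₁ : src (mul g h hgh) = rng k) (h₂ : src g = rng (mul h k hhk)),
      mul (mul g h hgh) k h₁ = mul g (mul h k hhk) h₂
  rng_mul_cancel : ∀ g (h : src (rng g) = rng g), mul (rng g) g h = g
  mul_src_cancel : ∀ g (h : src g = rng (src g)), mul g (src g) h = g
  src_inv : ∀ g, src (inv g) = rng g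
  rng_inv : ∀ g, rng (inv g) = src g
  inv_inv : ∀ g, inv (inv g) = g
  inv_mul_cancel : ∀ g (h : src (inv g) = rng g), mul (inv g) g h = src g
  mul_inv_cancel : ∀ g (h : src g = rng (inv g)), mul g (inv g) h = rng g
  continuous_src : Continuous src
  continuous_rng : Continuous rng
  continuous_inv : Continuous inv
  continuous_mul : Continuous fun p : {p : G × G // src p.1 = rng p.2} =>
    mul p.1.1 p.1.2 p.2

namespace TopGroupoid

variable {G : Type*} [TopologicalSpace G] (𝒢 : TopGroupoid G)

/-- The unit space `G⁰` of the groupoid. -/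
def units : Set G := {x | 𝒢.src x = x}

/-- A groupoid is principal if `g ↦ (r g, s g)` is injective. -/
def Principal : Prop := Function.Injective fun g => (𝒢.rng g, 𝒢.src g)

/-- A subset of `G` closed under inversion and composition. -/
def IsSubgroupoid (S : Set G) : Prop :=
  (∀ g ∈ S, 𝒢.inv g ∈ S) ∧
    ∀ g ∈ S, ∀ h ∈ S, ∀ hgh : 𝒢.src g = 𝒢.rng h, 𝒢.mul g h hgh ∈ S

/-- The subgroupoid generated by a subset. -/
def gen (X : Set G) : Set G := ⋂₀ {S | X ⊆ S ∧ 𝒢.IsSubgroupoid S}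

/-- A groupoid is étale if its range map is a local homeomorphism. -/
def Etale : Prop :=
  ∀ g : G, ∃ U : Set G, IsOpen U ∧ g ∈ U ∧ Set.InjOn 𝒢.rng U ∧
    ∀ V ⊆ U, IsOpen V → IsOpen (𝒢.rng '' V)

/-- Dynamic asymptotic dimension at most `d` (Guentner–Willett–Yu): for every open
precompact `V ⊆ G` there are open sets `U₀, …, U_d` in the unit space covering
`s(V) ∪ r(V)` such that each `⟨{g ∈ V : s g, r g ∈ U i}⟩` is precompact. -/
def DadLE (d : ℕ) : Prop :=
  ∀ V : Set G, IsOpen V → IsCompact (closure V) →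
    ∃ U : Fin (d + 1) → Set G,
      (∀ i, IsOpen (U i) ∧ U i ⊆ 𝒢.units) ∧
      (𝒢.src '' V ∪ 𝒢.rng '' V ⊆ ⋃ i, U i) ∧
      ∀ i, IsCompact (closure (𝒢.gen {g ∈ V | 𝒢.src g ∈ U i ∧ 𝒢.rng g ∈ U i}))

/-- Dynamic asymptotic dimension as an extended natural number. -/
noncomputable def dad : ℕ∞ :=
  sInf {m : ℕ∞ | ∃ d : ℕ, m = d ∧ 𝒢.DadLE d}

end TopGroupoid

variable {G : Type*} [TopologicalSpace G]

/-- The basis for the topology of the Alexandrov groupoid `G̃ = G ∪ {∞}`: the whole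
space, the open sets of `G`, and the open sets of the one-point compactification of
the unit space. -/
def alexBasis (𝒢 : TopGroupoid G) : Set (Set (Option G)) :=
  {Set.univ} ∪ {S | ∃ U : Set G, IsOpen U ∧ S = some '' U} ∪
    {S | ∃ K : Set G, K ⊆ 𝒢.units ∧ IsCompact K ∧
      S = insert none (some '' (𝒢.units \ K))}

/-- The topology of the Alexandrov groupoid. -/
def alexTop (𝒢 : TopGroupoid G) : TopologicalSpace (Option G) :=
  TopologicalSpace.generateFrom (alexBasis 𝒢)

section Aux

open Set Topology TopologicalSpace

namespace TopGroupoid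

variable {G : Type*} [TopologicalSpace G] (𝒢 : TopGroupoid G)

theorem mul_congr {g g' h h' : G} (hg : g = g') (hh : h = h')
    (p : 𝒢.src g = 𝒢.rng h) (p' : 𝒢.src g' = 𝒢.rng h') :
    𝒢.mul g h p = 𝒢.mul g' h' p' := by subst hg; subst hh; rfl

theorem src_unit {u : G} (hu : u ∈ 𝒢.units) : 𝒢.src u = u := hu

theorem rng_unit {u : G} (hu : u ∈ 𝒢.units) : 𝒢.rng u = u := by
  conv_lhs => rw [← hu]
  rw [𝒢.rng_src u, hu]

theorem src_mem_units (g : G) : 𝒢.src g ∈ 𝒢.units := 𝒢.src_src g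

theorem rng_mem_units (g : G) : 𝒢.rng g ∈ 𝒢.units := 𝒢.src_rng g

theorem inv_unit {u : G} (hu : u ∈ 𝒢.units) : 𝒢.inv u = u := by
  have h₁ : 𝒢.src (𝒢.inv u) = 𝒢.rng u := 𝒢.src_inv u
  have h₂ : 𝒢.src (𝒢.inv u) = 𝒢.rng (𝒢.src (𝒢.inv u)) := by
    rw [𝒢.rng_src]
  have e1 : 𝒢.mul (𝒢.inv u) (𝒢.src (𝒢.inv u)) h₂ = 𝒢.inv u := 𝒢.mul_src_cancel _ h₂
  have e2 : 𝒢.mul (𝒢.inv u) u h₁ = 𝒢.src u := 𝒢.inv_mul_cancel u h₁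
  have hsu : 𝒢.src (𝒢.inv u) = u := by rw [h₁, 𝒢.rng_unit hu]
  calc 𝒢.inv u = 𝒢.mul (𝒢.inv u) u h₁ := e1.symm.trans (𝒢.mul_congr rfl hsu h₂ h₁)
    _ = 𝒢.src u := e2
    _ = u := hu

theorem unit_mul {u : G} (hu : u ∈ 𝒢.units) (p : 𝒢.src u = 𝒢.rng u) :
    𝒢.mul u u p = u := by
  have h₂ : 𝒢.src u = 𝒢.rng (𝒢.src u) := by rw [𝒢.rng_src]
  calc 𝒢.mul u u p = 𝒢.mul u (𝒢.src u) h₂ := 𝒢.mul_congr rfl hu.symm p h₂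
    _ = u := 𝒢.mul_src_cancel u h₂

theorem subset_gen {X : Set G} : X ⊆ 𝒢.gen X := fun g hg =>
  Set.mem_sInter.2 fun _ hS => hS.1 hg

theorem gen_subset {X S : Set G} (hXS : X ⊆ S) (hS : 𝒢.IsSubgroupoid S) :
    𝒢.gen X ⊆ S := Set.sInter_subset_of_mem ⟨hXS, hS⟩

theorem gen_mono {X Y : Set G} (h : X ⊆ Y) : 𝒢.gen X ⊆ 𝒢.gen Y := fun g hg =>
  Set.mem_sInter.2 fun S hS => Set.mem_sInter.1 hg S ⟨h.trans hS.1, hS.2⟩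

theorem gen_isSubgroupoid (X : Set G) : 𝒢.IsSubgroupoid (𝒢.gen X) := by
  constructor
  · intro g hg
    exact Set.mem_sInter.2 fun S hS => hS.2.1 g (Set.mem_sInter.1 hg S hS) 
  · intro g hg h hh hgh
    exact Set.mem_sInter.2 fun S hS =>
      hS.2.2 g (Set.mem_sInter.1 hg S hS) h (Set.mem_sInter.1 hh S hS) hgh

/-- Any set of the form `{g | src g ∈ K ∧ rng g ∈ K}` is a subgroupoid. -/
theorem isSubgroupoid_srcrng (K : Set G) :
    𝒢.IsSubgroupoid {g | 𝒢.src g ∈ K ∧ 𝒢.rng g ∈ K} := by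
  constructor
  · intro g hg; exact ⟨by rw [𝒢.src_inv]; exact hg.2, by rw [𝒢.rng_inv]; exact hg.1⟩
  · intro g hg h hh hgh
    exact ⟨by rw [𝒢.src_mul]; exact hh.1, by rw [𝒢.rng_mul]; exact hg.2⟩

theorem gen_srcrng {X K : Set G} (hs : 𝒢.src '' X ⊆ K) (hr : 𝒢.rng '' X ⊆ K) :
    𝒢.gen X ⊆ {g | 𝒢.src g ∈ K ∧ 𝒢.rng g ∈ K} :=
  𝒢.gen_subset (fun g hg => ⟨hs ⟨g, hg, rfl⟩, hr ⟨g, hg, rfl⟩⟩) (𝒢.isSubgroupoid_srcrng K)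

/-- Adjoining units to a generating set only adds those units. -/
theorem gen_union_units {X Z : Set G} (hZ : Z ⊆ 𝒢.units) :
    𝒢.gen (X ∪ Z) ⊆ 𝒢.gen X ∪ Z := by
  apply 𝒢.gen_subset (Set.union_subset_union (𝒢.subset_gen) subset_rfl)
  constructor
  · rintro g (hg | hg)
    · exact Or.inl ((𝒢.gen_isSubgroupoid X).1 g hg)
    · rw [𝒢.inv_unit (hZ hg)]; exact Or.inr hg
  · rintro g (hg | hg) h (hh | hh) hgh
    · exact Or.inl ((𝒢.gen_isSubgroupoid X).2 g hg h hh hgh)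
    · -- h is a unit, so `src g = rng h = h` and the product is `g`
      have hh' : h = 𝒢.src g := by rw [hgh, 𝒢.rng_unit (hZ hh)]
      have h₂ : 𝒢.src g = 𝒢.rng (𝒢.src g) := by rw [𝒢.rng_src]
      have : 𝒢.mul g h hgh = 𝒢.mul g (𝒢.src g) h₂ := 𝒢.mul_congr rfl hh' hgh h₂
      rw [this, 𝒢.mul_src_cancel g h₂]; exact Or.inl hg
    · -- g is a unit, so `g = rng h` and the product is `h`
      have hg' : g = 𝒢.rng h := by rw [← hgh, 𝒢.src_unit (hZ hg)]
      have h₂ : 𝒢.src (𝒢.rng h) = 𝒢.rng h := 𝒢.src_rng h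
      have : 𝒢.mul g h hgh = 𝒢.mul (𝒢.rng h) h h₂ := 𝒢.mul_congr hg' rfl hgh h₂
      rw [this, 𝒢.rng_mul_cancel h h₂]; exact Or.inl hh
    · have hg' : g = 𝒢.rng h := by rw [← hgh, 𝒢.src_unit (hZ hg)]
      have h₂ : 𝒢.src (𝒢.rng h) = 𝒢.rng h := 𝒢.src_rng h
      have : 𝒢.mul g h hgh = 𝒢.mul (𝒢.rng h) h h₂ := 𝒢.mul_congr hg' rfl hgh h₂
      rw [this, 𝒢.rng_mul_cancel h h₂]; exact Or.inr hh

end TopGroupoid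

end Aux
section AuxTop

open Set Topology TopologicalSpace

variable {G : Type*} [TopologicalSpace G] [T2Space G] (𝒢 : TopGroupoid G)
variable [inst : TopologicalSpace (Option G)]

theorem alex_isOpen_some (hinst : inst = alexTop 𝒢) {U : Set G} (hU : IsOpen U) :
    IsOpen (some '' U) := by
  subst hinst
  exact isOpen_generateFrom_of_mem (Or.inl (Or.inr ⟨U, hU, rfl⟩))

theorem alex_isOpen_inf (hinst : inst = alexTop 𝒢) {K : Set G} (hKu : K ⊆ 𝒢.units)
    (hK : IsCompact K) : IsOpen (insert none (some '' (𝒢.units \ K))) := by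
  subst hinst
  exact isOpen_generateFrom_of_mem (Or.inr ⟨K, hKu, hK, rfl⟩)

theorem alex_continuous_some (hrd : IsOpen 𝒢.units) (hinst : inst = alexTop 𝒢) :
    Continuous (some : G → Option G) := by
  subst hinst
  rw [alexTop, continuous_generateFrom_iff]
  rintro S ((rfl | ⟨U, hU, rfl⟩) | ⟨K, hKu, hK, rfl⟩)
  · simpa using isOpen_univ
  · rw [Set.preimage_image_eq U (Option.some_injective G)]; exact hU
  · have : (some : G → Option G) ⁻¹' (insert none (some '' (𝒢.units \ K)))
        = 𝒢.units \ K := by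
      ext x
      simp [Set.mem_insert_iff, Set.mem_image, Option.some_injective G |>.eq_iff]
    rw [this]
    exact hrd.sdiff hK.isClosed

theorem alex_isOpenEmbedding (hrd : IsOpen 𝒢.units) (hinst : inst = alexTop 𝒢) :
    Topology.IsOpenEmbedding (some : G → Option G) :=
  Topology.IsOpenEmbedding.of_continuous_injective_isOpenMap
    (alex_continuous_some 𝒢 hrd hinst) (Option.some_injective G)
    (fun U hU => by rw [show U = U from rfl]; exact alex_isOpen_some 𝒢 hinst hU)

theorem alex_isClosed_insert (hinst : inst = alexTop 𝒢) {C : Set G} (hC : IsClosed C) :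
    IsClosed (insert none (some '' C)) := by
  rw [← isOpen_compl_iff]
  have : (insert none (some '' C))ᶜ = some '' Cᶜ := by
    ext x
    cases x with
    | none => simp
    | some a => simp [Option.some_injective G |>.eq_iff]
  rw [this]
  exact alex_isOpen_some 𝒢 hinst hC.isOpen_compl

theorem alex_closure_some_subset (hinst : inst = alexTop 𝒢) (T : Set G) :
    closure (some '' T) ⊆ insert none (some '' closure T) :=
  closure_minimal ((Set.image_mono subset_closure).trans (Set.subset_insert _ _))
    (alex_isClosed_insert 𝒢 hinst isClosed_closure)

theorem alex_compact_insert (hrd : IsOpen 𝒢.units) (hinst : inst = alexTop 𝒢)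
    {C : Set G} (hC : IsCompact C) : IsCompact (insert none (some '' C)) :=
  (hC.image (alex_continuous_some 𝒢 hrd hinst)).insert none

omit [T2Space G] inst in
theorem alex_nhds_none_aux {W : Set (Option G)}
    (hW : TopologicalSpace.GenerateOpen (alexBasis 𝒢) W) :
    none ∈ W → ∃ K : Set G, IsCompact K ∧ K ⊆ 𝒢.units ∧
      insert none (some '' (𝒢.units \ K)) ⊆ W := by
  induction hW with
  | basic S hS =>
    rintro hn
    rcases hS with ((rfl | ⟨U, hU, rfl⟩) | ⟨K, hKu, hK, rfl⟩)
    · exact ⟨∅, isCompact_empty, Set.empty_subset _, Set.subset_univ _⟩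
    · simp at hn
    · exact ⟨K, hK, hKu, subset_rfl⟩
  | univ => exact fun _ => ⟨∅, isCompact_empty, Set.empty_subset _, Set.subset_univ _⟩
  | inter S T hS hT ihS ihT =>
    intro hn
    obtain ⟨K₁, hK₁, hK₁u, h₁⟩ := ihS hn.1
    obtain ⟨K₂, hK₂, hK₂u, h₂⟩ := ihT hn.2
    refine ⟨K₁ ∪ K₂, hK₁.union hK₂, Set.union_subset hK₁u hK₂u, Set.subset_inter ?_ ?_⟩
    · exact (Set.insert_subset_insert (Set.image_mono
        (Set.diff_subset_diff_right Set.subset_union_left))).trans h₁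
    · exact (Set.insert_subset_insert (Set.image_mono
        (Set.diff_subset_diff_right Set.subset_union_right))).trans h₂
  | sUnion 𝒮 h ih =>
    intro hn
    obtain ⟨S, hS, hnS⟩ := hn
    obtain ⟨K, hK, hKu, hsub⟩ := ih S hS hnS
    exact ⟨K, hK, hKu, hsub.trans (Set.subset_sUnion_of_mem hS)⟩

theorem alex_mem_nhds_none (hinst : inst = alexTop 𝒢) {W : Set (Option G)}
    (hW : IsOpen W) (hn : none ∈ W) :
    ∃ K : Set G, IsCompact K ∧ K ⊆ 𝒢.units ∧
      insert none (some '' (𝒢.units \ K)) ⊆ W := by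
  subst hinst
  exact alex_nhds_none_aux 𝒢 hW hn

theorem alex_compact_Utilde (hrd : IsOpen 𝒢.units) (hinst : inst = alexTop 𝒢) :
    IsCompact (insert none (some '' 𝒢.units)) := by
  classical
  refine isCompact_of_finite_subcover fun {ι} U hUo hcov => ?_
  have hnone : (none : Option G) ∈ ⋃ i, U i := hcov (Set.mem_insert _ _)
  obtain ⟨i₀, hi₀⟩ := Set.mem_iUnion.1 hnone
  obtain ⟨K, hK, hKu, hsub⟩ := alex_mem_nhds_none 𝒢 hinst (hUo i₀) hi₀
  have hKc : IsCompact (some '' K) := hK.image (alex_continuous_some 𝒢 hrd hinst)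
  have hKcov : some '' K ⊆ ⋃ i, U i := fun x hx => by
    obtain ⟨u, hu, rfl⟩ := hx
    exact hcov (Set.mem_insert_iff.2 (Or.inr ⟨u, hKu hu, rfl⟩))
  obtain ⟨t, ht⟩ := hKc.elim_finite_subcover U hUo hKcov
  refine ⟨insert i₀ t, ?_⟩
  rintro x (rfl | ⟨u, hu, rfl⟩)
  · exact Set.mem_biUnion (Finset.mem_insert_self _ _) hi₀
  · by_cases hmem : u ∈ K
    · obtain ⟨i, hi, hx⟩ := Set.mem_iUnion₂.1 (ht ⟨u, hmem, rfl⟩)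
      exact Set.mem_biUnion (Finset.mem_insert_of_mem hi) hx
    · exact Set.mem_biUnion (Finset.mem_insert_self _ _)
        (hsub (Set.mem_insert_iff.2 (Or.inr ⟨u, ⟨hu, hmem⟩, rfl⟩)))

theorem alex_isClosed_Utilde (hinst : inst = alexTop 𝒢) :
    IsClosed (insert none (some '' 𝒢.units)) :=
  alex_isClosed_insert 𝒢 hinst (isClosed_eq 𝒢.continuous_src continuous_id)

theorem alex_compact_preimage (hrd : IsOpen 𝒢.units) (hinst : inst = alexTop 𝒢)
    {C : Set (Option G)} (hC : IsCompact C) (hC' : C ⊆ Set.range (some : G → Option G)) :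
    IsCompact ((some : G → Option G) ⁻¹' C) :=
  (alex_isOpenEmbedding 𝒢 hrd hinst).isInducing.isCompact_preimage' hC hC'

end AuxTop
section Transfer

open Set Topology TopologicalSpace

variable {G : Type*} [TopologicalSpace G] [inst : TopologicalSpace (Option G)]
variable (𝒢 : TopGroupoid G) (𝒢' : TopGroupoid (Option G))
variable (hsrc : ∀ g : G, 𝒢'.src (some g) = some (𝒢.src g)) (hsrc' : 𝒢'.src none = none)
variable (hrng : ∀ g : G, 𝒢'.rng (some g) = some (𝒢.rng g)) (hrng' : 𝒢'.rng none = none)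
variable (hinv : ∀ g : G, 𝒢'.inv (some g) = some (𝒢.inv g)) (hinv' : 𝒢'.inv none = none)
variable (hmul : ∀ (g h : G) (hgh : 𝒢.src g = 𝒢.rng h)
        (hgh' : 𝒢'.src (some g) = 𝒢'.rng (some h)),
      𝒢'.mul (some g) (some h) hgh' = some (𝒢.mul g h hgh))
variable (hmul' : ∀ hinf : 𝒢'.src none = 𝒢'.rng none, 𝒢'.mul none none hinf = none)

include hsrc hrng in
theorem trans_units_some {u : G} : some u ∈ 𝒢'.units ↔ u ∈ 𝒢.units := by
  constructor
  · intro h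
    exact Option.some_injective G (by rw [← hsrc u]; exact h)
  · intro h
    show 𝒢'.src (some u) = some u
    rw [hsrc u, h]

include hsrc' in
theorem trans_units_none : (none : Option G) ∈ 𝒢'.units := hsrc'

include hsrc hrng hinv hmul in
theorem trans_isSubgroupoid_image {S : Set G} (hS : 𝒢.IsSubgroupoid S) :
    𝒢'.IsSubgroupoid (some '' S) := by
  constructor
  · rintro x ⟨g, hg, rfl⟩
    rw [hinv g]
    exact ⟨𝒢.inv g, hS.1 g hg, rfl⟩
  · rintro x ⟨g, hg, rfl⟩ y ⟨h, hh, rfl⟩ p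
    have q : 𝒢.src g = 𝒢.rng h := by
      apply Option.some_injective G
      rw [← hsrc g, ← hrng h]; exact p
    rw [hmul g h q p]
    exact ⟨𝒢.mul g h q, hS.2 g hg h hh q, rfl⟩

include hsrc hrng hinv hmul in
theorem trans_gen_image (X : Set G) : 𝒢'.gen (some '' X) = some '' 𝒢.gen X := by
  apply Set.Subset.antisymm
  · exact 𝒢'.gen_subset (Set.image_mono (𝒢.subset_gen))
      (trans_isSubgroupoid_image 𝒢 𝒢' hsrc hrng hinv hmul (𝒢.gen_isSubgroupoid X))
  · have hsub : 𝒢.gen X ⊆ some ⁻¹' (𝒢'.gen (some '' X)) := by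
      apply 𝒢.gen_subset
      · intro g hg
        exact 𝒢'.subset_gen ⟨g, hg, rfl⟩
      · have hG' := 𝒢'.gen_isSubgroupoid (some '' X)
        constructor
        · intro g hg
          have := hG'.1 (some g) hg
          rwa [hinv g] at this
        · intro g hg h hh q
          have p : 𝒢'.src (some g) = 𝒢'.rng (some h) := by rw [hsrc g, hrng h, q]
          have := hG'.2 (some g) hg (some h) hh p
          rwa [hmul g h q p] at this
    rintro x ⟨g, hg, rfl⟩
    exact hsub hg

include hsrc hsrc' hrng hrng' hinv hmul hinv' hmul' in
theorem trans_gen_insert_none (X : Set G) :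
    𝒢'.gen (insert none (some '' X)) ⊆ insert none (some '' 𝒢.gen X) := by
  apply 𝒢'.gen_subset
  · exact Set.insert_subset_insert (Set.image_mono (𝒢.subset_gen))
  · constructor
    · rintro x (rfl | ⟨g, hg, rfl⟩)
      · rw [hinv']; exact Set.mem_insert _ _
      · rw [hinv g]
        exact Set.mem_insert_of_mem _ ⟨𝒢.inv g, (𝒢.gen_isSubgroupoid X).1 g hg, rfl⟩
    · rintro x (rfl | ⟨g, hg, rfl⟩) y (rfl | ⟨h, hh, rfl⟩) p
      · rw [hmul' p]; exact Set.mem_insert _ _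
      · exact absurd (by rw [hsrc', hrng h] at p; exact p) (by simp)
      · exact absurd (by rw [hsrc g, hrng'] at p; exact p) (by simp)
      · have q : 𝒢.src g = 𝒢.rng h := by
          apply Option.some_injective G
          rw [← hsrc g, ← hrng h]; exact p
        rw [hmul g h q p]
        exact Set.mem_insert_of_mem _
          ⟨𝒢.mul g h q, (𝒢.gen_isSubgroupoid X).2 g hg h hh q, rfl⟩

end Transfer
section Directions

open Set Topology TopologicalSpace

variable {G : Type*} [TopologicalSpace G] [T2Space G] [LocallyCompactSpace G]
variable [inst : TopologicalSpace (Option G)]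
variable (𝒢 : TopGroupoid G) (𝒢' : TopGroupoid (Option G))
variable (hrd : IsOpen 𝒢.units) (hinst : inst = alexTop 𝒢)
variable (hsrc : ∀ g : G, 𝒢'.src (some g) = some (𝒢.src g)) (hsrc' : 𝒢'.src none = none)
variable (hrng : ∀ g : G, 𝒢'.rng (some g) = some (𝒢.rng g)) (hrng' : 𝒢'.rng none = none)
variable (hinv : ∀ g : G, 𝒢'.inv (some g) = some (𝒢.inv g)) (hinv' : 𝒢'.inv none = none)
variable (hmul : ∀ (g h : G) (hgh : 𝒢.src g = 𝒢.rng h)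
        (hgh' : 𝒢'.src (some g) = 𝒢'.rng (some h)),
      𝒢'.mul (some g) (some h) hgh' = some (𝒢.mul g h hgh))
variable (hmul' : ∀ hinf : 𝒢'.src none = 𝒢'.rng none, 𝒢'.mul none none hinf = none)

include hrd hinst hsrc hrng hinv hmul in
theorem dad_dir1 {d : ℕ} (h : 𝒢'.DadLE d) : 𝒢.DadLE d := by
  intro V hV hVc
  have hV' : IsOpen (some '' V) := alex_isOpen_some 𝒢 hinst hV
  have hV'c : IsCompact (closure (some '' V)) :=
    IsCompact.of_isClosed_subset (alex_compact_insert 𝒢 hrd hinst hVc)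
      isClosed_closure (alex_closure_some_subset 𝒢 hinst V)
  obtain ⟨U', hU'o, hU'cov, hU'gen⟩ := h (some '' V) hV' hV'c
  refine ⟨fun i => some ⁻¹' U' i, fun i => ⟨(hU'o i).1.preimage
    (alex_continuous_some 𝒢 hrd hinst), fun u hu => ?_⟩, ?_, fun i => ?_⟩
  · -- preimage of units' is units
    have := (hU'o i).2 hu
    have h2 : 𝒢'.src (some u) = some u := this
    rw [hsrc u] at h2
    exact Option.some_injective G h2
  · -- covering
    rintro x (⟨g, hg, rfl⟩ | ⟨g, hg, rfl⟩)
    · have : some (𝒢.src g) ∈ 𝒢'.src '' (some '' V) ∪ 𝒢'.rng '' (some '' V) :=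
        Or.inl ⟨some g, ⟨g, hg, rfl⟩, hsrc g⟩
      obtain ⟨i, hi⟩ := Set.mem_iUnion.1 (hU'cov this)
      exact Set.mem_iUnion.2 ⟨i, hi⟩
    · have : some (𝒢.rng g) ∈ 𝒢'.src '' (some '' V) ∪ 𝒢'.rng '' (some '' V) :=
        Or.inr ⟨some g, ⟨g, hg, rfl⟩, hrng g⟩
      obtain ⟨i, hi⟩ := Set.mem_iUnion.1 (hU'cov this)
      exact Set.mem_iUnion.2 ⟨i, hi⟩
  · -- precompact generation
    set X : Set G := {g ∈ V | 𝒢.src g ∈ some ⁻¹' U' i ∧ 𝒢.rng g ∈ some ⁻¹' U' i} with hX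
    have hYX : {g' ∈ some '' V | 𝒢'.src g' ∈ U' i ∧ 𝒢'.rng g' ∈ U' i} = some '' X := by
      ext x
      constructor
      · rintro ⟨⟨g, hg, rfl⟩, h1, h2⟩
        rw [hsrc g] at h1; rw [hrng g] at h2
        exact ⟨g, ⟨hg, h1, h2⟩, rfl⟩
      · rintro ⟨g, ⟨hg, h1, h2⟩, rfl⟩
        exact ⟨⟨g, hg, rfl⟩, by rw [hsrc g]; exact h1, by rw [hrng g]; exact h2⟩
    have hgen := hU'gen i
    rw [hYX, trans_gen_image 𝒢 𝒢' hsrc hrng hinv hmul] at hgen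
    -- hgen : IsCompact (closure (some '' 𝒢.gen X))
    set K₀ : Set G := 𝒢.src '' closure V ∪ 𝒢.rng '' closure V with hK₀
    have hK₀c : IsCompact K₀ := (hVc.image 𝒢.continuous_src).union (hVc.image 𝒢.continuous_rng)
    have hK₀u : K₀ ⊆ 𝒢.units := by
      rintro x (⟨g, _, rfl⟩ | ⟨g, _, rfl⟩)
      · exact 𝒢.src_mem_units g
      · exact 𝒢.rng_mem_units g
    have hsr : 𝒢.gen X ⊆ {g | 𝒢.src g ∈ K₀ ∧ 𝒢.rng g ∈ K₀} := by
      apply 𝒢.gen_srcrng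
      · rintro x ⟨g, hg, rfl⟩
        exact Or.inl ⟨g, subset_closure hg.1, rfl⟩
      · rintro x ⟨g, hg, rfl⟩
        exact Or.inr ⟨g, subset_closure hg.1, rfl⟩
    have hnone : (none : Option G) ∉ closure (some '' 𝒢.gen X) := by
      intro hmem
      have hopen : IsOpen (insert none (some '' (𝒢.units \ K₀))) :=
        alex_isOpen_inf 𝒢 hinst hK₀u hK₀c
      obtain ⟨x, hx1, hx2⟩ := (mem_closure_iff.1 hmem) _ hopen (Set.mem_insert _ _)
      rcases hx1 with rfl | ⟨u, hu, rfl⟩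
      · obtain ⟨g, _, hc⟩ := hx2; exact nomatch hc
      · obtain ⟨g, hg, hc⟩ := hx2
        obtain rfl := Option.some_injective G hc
        have hK : 𝒢.src g ∈ K₀ := (hsr hg).1
        rw [𝒢.src_unit hu.1] at hK
        exact hu.2 hK
    have hsubrange : closure (some '' 𝒢.gen X) ⊆ Set.range (some : G → Option G) := by
      intro x hx
      cases x with
      | none => exact absurd hx hnone
      | some a => exact ⟨a, rfl⟩
    have hD : IsCompact (some ⁻¹' closure (some '' 𝒢.gen X)) :=
      alex_compact_preimage 𝒢 hrd hinst hgen hsubrange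
    refine IsCompact.of_isClosed_subset hD isClosed_closure (closure_minimal ?_ ?_)
    · intro g hg
      exact subset_closure ⟨g, hg, rfl⟩
    · exact IsClosed.preimage (alex_continuous_some 𝒢 hrd hinst) isClosed_closure
include hrd hinst hsrc hsrc' hrng hrng' hinv hinv' hmul hmul' in
theorem dad_dir2 {d : ℕ} (h : 𝒢.DadLE d) : 𝒢'.DadLE d := by
  intro V' hV' hV'c
  set V₀ : Set G := some ⁻¹' V' with hV₀
  have hV₀o : IsOpen V₀ := hV'.preimage (alex_continuous_some 𝒢 hrd hinst)
  have hunits_closed : IsClosed 𝒢.units := isClosed_eq 𝒢.continuous_src continuous_id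
  set A : Set G := V₀ \ 𝒢.units with hA
  have hAo : IsOpen A := hV₀o.sdiff hunits_closed
  have hUtilde_open : IsOpen (insert none (some '' 𝒢.units)) := by
    have := alex_isOpen_inf 𝒢 hinst (Set.empty_subset _) isCompact_empty
    rwa [Set.diff_empty] at this
  -- A is precompact in G
  have hnoneA : (none : Option G) ∉ closure (some '' A) := by
    intro hmem
    obtain ⟨x, hx1, hx2⟩ := (mem_closure_iff.1 hmem) _ hUtilde_open (Set.mem_insert _ _)
    obtain ⟨g, hgA, rfl⟩ := hx2
    rcases hx1 with hc | ⟨u, hu, hc⟩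
    · exact nomatch hc
    · obtain rfl := Option.some_injective G hc
      exact hgA.2 hu
  have hclA_sub : closure (some '' A) ⊆ closure V' := by
    apply closure_mono
    rintro x ⟨g, hg, rfl⟩
    exact hg.1
  have hclAc : IsCompact (closure (some '' A)) :=
    IsCompact.of_isClosed_subset hV'c isClosed_closure hclA_sub
  have hrangeA : closure (some '' A) ⊆ Set.range (some : G → Option G) := by
    intro x hx
    cases x with
    | none => exact absurd hx hnoneA
    | some a => exact ⟨a, rfl⟩
  have hDA : IsCompact (some ⁻¹' closure (some '' A)) :=
    alex_compact_preimage 𝒢 hrd hinst hclAc hrangeA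
  have hclA : IsCompact (closure A) := by
    refine IsCompact.of_isClosed_subset hDA isClosed_closure (closure_minimal ?_ ?_)
    · intro g hg; exact subset_closure ⟨g, hg, rfl⟩
    · exact IsClosed.preimage (alex_continuous_some 𝒢 hrd hinst) isClosed_closure
  set K₀ : Set G := 𝒢.src '' closure A ∪ 𝒢.rng '' closure A with hK₀
  have hK₀c : IsCompact K₀ := (hclA.image 𝒢.continuous_src).union (hclA.image 𝒢.continuous_rng)
  have hK₀u : K₀ ⊆ 𝒢.units := by
    rintro x (⟨g, _, rfl⟩ | ⟨g, _, rfl⟩)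
    · exact 𝒢.src_mem_units g
    · exact 𝒢.rng_mem_units g
  obtain ⟨K', hK'c, hK'i⟩ := exists_compact_superset hK₀c
  set O : Set G := interior K' with hO
  have hK₀O : K₀ ⊆ O := hK'i
  set W : Set G := A ∪ (V₀ ∩ 𝒢.units ∩ O) with hWdef
  have hWo : IsOpen W := hAo.union ((hV₀o.inter hrd).inter isOpen_interior)
  have hWc : IsCompact (closure W) := by
    refine IsCompact.of_isClosed_subset (hclA.union hK'c) isClosed_closure ?_
    rw [closure_union]
    refine Set.union_subset_union subset_rfl ?_
    exact (closure_mono fun x hx => hx.2).trans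
      (closure_minimal interior_subset hK'c.isClosed)
  obtain ⟨U, hUo, hUcov, hUgen⟩ := h W hWo hWc
  set Ω : Set (Option G) := insert none (some '' (𝒢.units \ K₀)) with hΩ
  have hΩo : IsOpen Ω := alex_isOpen_inf 𝒢 hinst hK₀u hK₀c
  refine ⟨fun i => some '' U i ∪ Ω, fun i => ⟨?_, ?_⟩, ?_, fun i => ?_⟩
  · exact (alex_isOpen_some 𝒢 hinst (hUo i).1).union hΩo
  · rintro x (⟨u, hu, rfl⟩ | hx)
    · exact (trans_units_some 𝒢 𝒢' hsrc hrng).2 ((hUo i).2 hu)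
    · rcases hx with rfl | ⟨u, hu, rfl⟩
      · exact trans_units_none 𝒢' hsrc'
      · exact (trans_units_some 𝒢 𝒢' hsrc hrng).2 hu.1
  · -- covering
    have hcov1 : ∀ g : G, g ∈ W → ∀ x : G, (x = 𝒢.src g ∨ x = 𝒢.rng g) →
        some x ∈ ⋃ i, (some '' U i ∪ Ω) := by
      intro g hgW x hx
      have : x ∈ ⋃ i, U i := by
        rcases hx with rfl | rfl
        · exact hUcov (Or.inl ⟨g, hgW, rfl⟩)
        · exact hUcov (Or.inr ⟨g, hgW, rfl⟩)
      obtain ⟨i, hi⟩ := Set.mem_iUnion.1 this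
      exact Set.mem_iUnion.2 ⟨i, Or.inl ⟨x, hi, rfl⟩⟩
    have hcovu : ∀ g : G, some g ∈ V' → g ∈ 𝒢.units →
        some g ∈ ⋃ i, (some '' U i ∪ Ω) := by
      intro g hgV hgu
      by_cases hgO : g ∈ O
      · have hgW : g ∈ W := Or.inr ⟨⟨hgV, hgu⟩, hgO⟩
        have := hcov1 g hgW (𝒢.src g) (Or.inl rfl)
        rwa [𝒢.src_unit hgu] at this
      · have hgK : g ∉ K₀ := fun hk => hgO (hK₀O hk)
        exact Set.mem_iUnion.2 ⟨0, Or.inr (Set.mem_insert_of_mem _ ⟨g, ⟨hgu, hgK⟩, rfl⟩)⟩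
    rintro x (⟨g', hg', rfl⟩ | ⟨g', hg', rfl⟩)
    · cases g' with
      | none =>
        rw [hsrc']
        exact Set.mem_iUnion.2 ⟨0, Or.inr (Set.mem_insert _ _)⟩
      | some g =>
        rw [hsrc g]
        by_cases hgu : g ∈ 𝒢.units
        · have := hcovu g hg' hgu
          rwa [𝒢.src_unit hgu]
        · exact hcov1 g (Or.inl ⟨hg', hgu⟩) _ (Or.inl rfl)
    · cases g' with
      | none =>
        rw [hrng']
        exact Set.mem_iUnion.2 ⟨0, Or.inr (Set.mem_insert _ _)⟩
      | some g =>
        rw [hrng g]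
        by_cases hgu : g ∈ 𝒢.units
        · have := hcovu g hg' hgu
          rwa [𝒢.rng_unit hgu]
        · exact hcov1 g (Or.inl ⟨hg', hgu⟩) _ (Or.inr rfl)
  · -- precompact generation
    set X : Set G := {g ∈ W | 𝒢.src g ∈ U i ∧ 𝒢.rng g ∈ U i} with hXdef
    set Z : Set G := V₀ ∩ 𝒢.units with hZdef
    have hYsub : {g' ∈ V' | 𝒢'.src g' ∈ some '' U i ∪ Ω ∧ 𝒢'.rng g' ∈ some '' U i ∪ Ω}
        ⊆ insert none (some '' (X ∪ Z)) := by
      rintro x ⟨hxV, hx1, hx2⟩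
      cases x with
      | none => exact Set.mem_insert _ _
      | some g =>
        by_cases hgu : g ∈ 𝒢.units
        · exact Set.mem_insert_of_mem _ ⟨g, Or.inr ⟨hxV, hgu⟩, rfl⟩
        · have hgA : g ∈ A := ⟨hxV, hgu⟩
          have hextract : ∀ y : G, y ∈ K₀ → some y ∈ some '' U i ∪ Ω → y ∈ U i := by
            rintro y hyK (⟨u, hu, hc⟩ | hc | ⟨u, hu, hc⟩)
            · obtain rfl := Option.some_injective G hc; exact hu
            · exact nomatch hc
            · obtain rfl := Option.some_injective G hc; exact absurd hyK hu.2
          rw [hsrc g] at hx1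
          rw [hrng g] at hx2
          have hsK : 𝒢.src g ∈ K₀ := Or.inl ⟨g, subset_closure hgA, rfl⟩
          have hrK : 𝒢.rng g ∈ K₀ := Or.inr ⟨g, subset_closure hgA, rfl⟩
          exact Set.mem_insert_of_mem _
            ⟨g, Or.inl ⟨Or.inl hgA, hextract _ hsK hx1, hextract _ hrK hx2⟩, rfl⟩
    have hgen1 : 𝒢'.gen {g' ∈ V' | 𝒢'.src g' ∈ some '' U i ∪ Ω ∧ 𝒢'.rng g' ∈ some '' U i ∪ Ω}
        ⊆ insert none (some '' (𝒢.gen X ∪ Z)) := by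
      refine (𝒢'.gen_mono hYsub).trans ?_
      refine (trans_gen_insert_none 𝒢 𝒢' hsrc hsrc' hrng hrng' hinv hinv' hmul hmul'
        (X ∪ Z)).trans ?_
      exact Set.insert_subset_insert
        (Set.image_mono (𝒢.gen_union_units Set.inter_subset_right))
    have hmid : insert none (some '' (𝒢.gen X ∪ Z))
        ⊆ insert none (some '' 𝒢.units) ∪ some '' 𝒢.gen X := by
      rintro x (rfl | ⟨g, hg | hg, rfl⟩)
      · exact Or.inl (Set.mem_insert _ _)
      · exact Or.inr ⟨g, hg, rfl⟩
      · exact Or.inl (Set.mem_insert_of_mem _ ⟨g, hg.2, rfl⟩)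
    have hchain : closure (𝒢'.gen {g' ∈ V' |
          𝒢'.src g' ∈ some '' U i ∪ Ω ∧ 𝒢'.rng g' ∈ some '' U i ∪ Ω})
        ⊆ insert none (some '' 𝒢.units) ∪ insert none (some '' closure (𝒢.gen X)) := by
      refine (closure_mono (hgen1.trans hmid)).trans ?_
      rw [closure_union]
      refine Set.union_subset_union ?_ (alex_closure_some_subset 𝒢 hinst _)
      rw [(alex_isClosed_Utilde 𝒢 hinst).closure_eq]
    exact IsCompact.of_isClosed_subset
      ((alex_compact_Utilde 𝒢 hrd hinst).union
        (alex_compact_insert 𝒢 hrd hinst (hUgen i)))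
      isClosed_closure hchain
end Directions

/-- for a locally compact Hausdorff étale groupoid `G` with non-compact
unit space, the dynamic asymptotic dimension of `G` equals that of its Alexandrov
groupoid `G̃`. -/
theorem stmt_16 {G : Type*} [TopologicalSpace G] [T2Space G] [LocallyCompactSpace G]
    (𝒢 : TopGroupoid G) (hrd : IsOpen 𝒢.units) (hnc : ¬ IsCompact 𝒢.units)
    (het : 𝒢.Etale)
    [inst : TopologicalSpace (Option G)] (hinst : inst = alexTop 𝒢)
    (𝒢' : TopGroupoid (Option G))
    (hsrc : ∀ g : G, 𝒢'.src (some g) = some (𝒢.src g)) (hsrc' : 𝒢'.src none = none)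
    (hrng : ∀ g : G, 𝒢'.rng (some g) = some (𝒢.rng g)) (hrng' : 𝒢'.rng none = none)
    (hinv : ∀ g : G, 𝒢'.inv (some g) = some (𝒢.inv g)) (hinv' : 𝒢'.inv none = none)
    (hmul : ∀ (g h : G) (hgh : 𝒢.src g = 𝒢.rng h)
        (hgh' : 𝒢'.src (some g) = 𝒢'.rng (some h)),
      𝒢'.mul (some g) (some h) hgh' = some (𝒢.mul g h hgh))
    (hmul' : ∀ hinf : 𝒢'.src none = 𝒢'.rng none, 𝒢'.mul none none hinf = none) :
    𝒢.dad = 𝒢'.dad := by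
  have key : ∀ d : ℕ, 𝒢.DadLE d ↔ 𝒢'.DadLE d := fun d =>
    ⟨dad_dir2 𝒢 𝒢' hrd hinst hsrc hsrc' hrng hrng' hinv hinv' hmul hmul',
     dad_dir1 𝒢 𝒢' hrd hinst hsrc hrng hinv hmul⟩
  unfold TopGroupoid.dad
  congr 1
  ext m
  simp only [Set.mem_setOf_eq]
  constructor <;> rintro ⟨d, rfl, hd⟩
  · exact ⟨d, rfl, (key d).1 hd⟩
  · exact ⟨d, rfl, (key d).2 hd⟩
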